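/- Let C be a triangulated category equipped with a weight structure w, let m ≤ n be integers and let g : M → N be a morphism in C. Then g kills weights m,…,n if and only if for EVERY n-weight decomposition w_{≤n}M → M → w_{≥n+1}M → (w_{≤n}M)[1] of M and EVERY (m−1)-weight decomposition w_{≤m−1}N → N → w_{≥m}N → (w_{≤m−1}N)[1] of N there exist morphisms h : w_{≤n}M → w_{≤m−1}N and j : w_{≥n+1}M → w_{≥m}N such that (h, g, j) is a morphism of distinguished triangles (i.e. all three squares, including the one involving the connecting morphisms and h[1], commute). -/

import Mathlib

open CategoryTheory CategoryTheory.Limits CategoryTheory.Pretriangulated ZeroObject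

universe v u

variable (C : Type u) [Category.{v} C] [HasZeroObject C] [Preadditive C] [HasShift C ℤ]
  [∀ n : ℤ, (shiftFunctor C n).Additive] [Pretriangulated C]

/-- A weight structure on a triangulated category `C`: a pair of retract-closed classes
`le = C_{w≤0}` and `ge = C_{w≥0}` satisfying semi-invariance with respect to translations,
orthogonality, and the existence of weight decompositions. -/
structure WeightStructure where
  /-- the class `C_{w≤0}` -/
  le : Set C
  /-- the class `C_{w≥0}` -/
  ge : Set C
  /-- `C_{w≤0}` is closed under retracts -/
  le_retract : ∀ ⦃X Y : C⦄ (i : X ⟶ Y) (r : Y ⟶ X), i ≫ r = 𝟙 X → le Y → le X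
  /-- `C_{w≥0}` is closed under retracts -/
  ge_retract : ∀ ⦃X Y : C⦄ (i : X ⟶ Y) (r : Y ⟶ X), i ≫ r = 𝟙 X → ge Y → ge X
  /-- `C_{w≤0} ⊆ C_{w≤0}[1]`, i.e. `X ∈ C_{w≤0} → X[-1] ∈ C_{w≤0}` -/
  le_shift : ∀ ⦃X : C⦄, le X → le ((shiftFunctor C (-1 : ℤ)).obj X)
  /-- `C_{w≥0}[1] ⊆ C_{w≥0}`, i.e. `X ∈ C_{w≥0} → X[1] ∈ C_{w≥0}` -/
  ge_shift : ∀ ⦃X : C⦄, ge X → ge ((shiftFunctor C (1 : ℤ)).obj X)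
  /-- orthogonality: `Hom(X, Y[1]) = 0` for `X ∈ C_{w≤0}`, `Y ∈ C_{w≥0}` -/
  orth : ∀ ⦃X Y : C⦄, le X → ge Y → ∀ f : X ⟶ (shiftFunctor C (1 : ℤ)).obj Y, f = 0
  /-- existence of weight decompositions -/
  decomp : ∀ M : C, ∃ (X Y : C) (f : X ⟶ M) (g : M ⟶ Y)
      (h : Y ⟶ (shiftFunctor C (1 : ℤ)).obj X),
      Triangle.mk f g h ∈ (distTriang C) ∧ le X ∧ ge ((shiftFunctor C (-1 : ℤ)).obj Y)

variable {C}

namespace WeightStructure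

/-- `X ∈ C_{w≤i} = C_{w≤0}[i]`, i.e. `X[-i] ∈ C_{w≤0}`. -/
def leDeg (w : WeightStructure C) (i : ℤ) (X : C) : Prop :=
  w.le ((shiftFunctor C (-i)).obj X)

/-- `X ∈ C_{w≥i} = C_{w≥0}[i]`, i.e. `X[-i] ∈ C_{w≥0}`. -/
def geDeg (w : WeightStructure C) (i : ℤ) (X : C) : Prop :=
  w.ge ((shiftFunctor C (-i)).obj X)

/-- The triangle `A → M → B → A[1]` is an `m`-weight decomposition of `M`:
it is distinguished, `A ∈ C_{w≤m}` and `B ∈ C_{w≥m+1}`. -/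
def IsWeightDecomp (w : WeightStructure C) (m : ℤ) {A M B : C}
    (f : A ⟶ M) (g : M ⟶ B) (h : B ⟶ (shiftFunctor C (1 : ℤ)).obj A) : Prop :=
  Triangle.mk f g h ∈ (distTriang C) ∧ w.leDeg m A ∧ w.geDeg (m + 1) B

/-- `g : M ⟶ N` kills weights `m,…,n`: there exist an `n`-weight decomposition of `M` and an
`(m-1)`-weight decomposition of `N` such that the composite `w_{≤n}M → M → N → w_{≥m}N` is `0`. -/
def KillsWeights (w : WeightStructure C) (m n : ℤ) {M N : C} (g : M ⟶ N) : Prop :=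
  ∃ (A B A' B' : C) (f : A ⟶ M) (p : M ⟶ B) (δ : B ⟶ (shiftFunctor C (1 : ℤ)).obj A)
    (f' : A' ⟶ N) (p' : N ⟶ B') (δ' : B' ⟶ (shiftFunctor C (1 : ℤ)).obj A'),
    w.IsWeightDecomp n f p δ ∧ w.IsWeightDecomp (m - 1) f' p' δ' ∧ f ≫ g ≫ p' = 0

/-- `M` is without weights `m,…,n` if `𝟙 M` kills weights `m,…,n`. -/
def WithoutWeights (w : WeightStructure C) (m n : ℤ) (M : C) : Prop :=
  w.KillsWeights m n (𝟙 M)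

end WeightStructure

namespace WeightStructure

/-- Orthogonality in shifted degrees: any morphism from an object of `C_{w≤k}` to an
object of `C_{w≥k+1}` vanishes. -/
lemma orth_deg (w : WeightStructure C) {k : ℤ} {X Y : C} (hX : w.leDeg k X)
    (hY : w.geDeg (k + 1) Y) (φ : X ⟶ Y) : φ = 0 := by
  let e := (shiftFunctorAdd' C (-(k + 1)) 1 (-k) (by ring)).app Y
  have h := w.orth hX hY ((shiftFunctor C (-k)).map φ ≫ e.hom)
  have h2 : (shiftFunctor C (-k)).map φ = 0 := by
    rw [← Category.comp_id ((shiftFunctor C (-k)).map φ), ← e.hom_inv_id,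
      ← Category.assoc, h, zero_comp]
  exact (shiftFunctor C (-k)).map_injective (by rw [h2, Functor.map_zero])

/-- Weight decompositions exist in every degree `k`. -/
lemma exists_weightDecomp (w : WeightStructure C) (k : ℤ) (M : C) :
    ∃ (A B : C) (f : A ⟶ M) (p : M ⟶ B) (δ : B ⟶ (shiftFunctor C (1 : ℤ)).obj A),
      w.IsWeightDecomp k f p δ := by
  obtain ⟨X, Y, f, p, δ, hT, hX, hY⟩ := w.decomp ((shiftFunctor C (-k)).obj M)
  have hT' := Pretriangulated.Triangle.shift_distinguished _ hT k
  set T' := (CategoryTheory.shiftFunctor (Triangle C) k).obj (Triangle.mk f p δ) with hT'def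
  let e : T'.obj₂ ≅ M := (shiftFunctorCompIsoId C (-k) k (by ring)).app M
  refine ⟨T'.obj₁, T'.obj₃, T'.mor₁ ≫ e.hom, e.inv ≫ T'.mor₂, T'.mor₃, ?_, ?_, ?_⟩
  · refine isomorphic_distinguished _ hT' _ ?_
    exact Triangle.isoMk _ _ (Iso.refl _) e.symm (Iso.refl _) (by
      change (T'.mor₁ ≫ e.hom) ≫ e.inv = 𝟙 T'.obj₁ ≫ T'.mor₁; simp)
      (by exact Category.comp_id _)
      (by change T'.mor₃ ≫ (shiftFunctor C 1).map (𝟙 T'.obj₁) = 𝟙 T'.obj₃ ≫ T'.mor₃; simp)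
  · -- T'.obj₁ = X⟦k⟧
    have e₁ : ((shiftFunctor C (-k)).obj T'.obj₁) ≅ X :=
      (shiftFunctorCompIsoId C k (-k) (by ring)).app X
    exact w.le_retract e₁.hom e₁.inv e₁.hom_inv_id hX
  · -- T'.obj₃ = Y⟦k⟧, need w.ge ((Y⟦k⟧)⟦-(k+1)⟧), knowing w.ge (Y⟦-1⟧)
    have e₃ : ((shiftFunctor C (-(k + 1))).obj T'.obj₃) ≅ (shiftFunctor C (-1 : ℤ)).obj Y :=
      ((shiftFunctorAdd' C k (-(k + 1)) (-1) (by ring)).app Y).symm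
    exact w.ge_retract e₃.hom e₃.inv e₃.hom_inv_id hY

end WeightStructure

/-- Proposition 1.5 (condition (7)): `g` kills weights `m,…,n` if and only if EVERY
`n`-weight decomposition of `M` and EVERY `(m-1)`-weight decomposition of `N` can be
completed (by morphisms `h`, `j`) to a morphism of distinguished triangles `(h, g, j)`. -/
theorem killsWeights_iff_forall_decomp_extends (w : WeightStructure C) (m n : ℤ) (hmn : m ≤ n)
    {M N : C} (g : M ⟶ N) :
    w.KillsWeights m n g ↔
      ∀ ⦃A B A' B' : C⦄ (f : A ⟶ M) (p : M ⟶ B) (δ : B ⟶ (shiftFunctor C (1 : ℤ)).obj A)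
        (f' : A' ⟶ N) (p' : N ⟶ B') (δ' : B' ⟶ (shiftFunctor C (1 : ℤ)).obj A'),
        w.IsWeightDecomp n f p δ → w.IsWeightDecomp (m - 1) f' p' δ' →
        ∃ (h : A ⟶ A') (j : B ⟶ B'),
          f ≫ g = h ≫ f' ∧ p ≫ j = g ≫ p' ∧
          δ ≫ (shiftFunctor C (1 : ℤ)).map h = j ≫ δ' := by
  constructor
  · rintro ⟨A₀, B₀, A₀', B₀', f₀, p₀, δ₀, f₀', p₀', δ₀',
      ⟨hT₀, hA₀, hB₀⟩, ⟨hT₀', hA₀', hB₀'⟩, hz⟩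
    rintro A B A' B' f p δ f' p' δ' ⟨hT, hA, hB⟩ ⟨hT', hA', hB'⟩
    -- `f ≫ p₀ = 0` by orthogonality, so `f` lifts through `f₀`
    obtain ⟨a, ha⟩ := Triangle.coyoneda_exact₂ _ hT₀ f (w.orth_deg hA hB₀ (f ≫ p₀))
    -- `f₀ ≫ g` kills `p₀'`, so it lifts through `f₀'`
    obtain ⟨b, hb⟩ := Triangle.coyoneda_exact₂ _ hT₀' (f₀ ≫ g)
      (by exact (Category.assoc _ _ _).trans hz)
    -- hence `f ≫ g ≫ p' = 0` since `f₀' ≫ p' = 0` by orthogonality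
    have hz' : (f ≫ g) ≫ p' = 0 := by
      have h₁ : f₀' ≫ p' = 0 := w.orth_deg hA₀' hB' (f₀' ≫ p')
      change A ⟶ A₀ at a
      change A₀ ⟶ A₀' at b
      dsimp only [Triangle.mk] at ha hb
      rw [Category.assoc, ha, Category.assoc, ← Category.assoc f₀ g p', hb,
        Category.assoc b, h₁, comp_zero, comp_zero]
    obtain ⟨h, hh⟩ := Triangle.coyoneda_exact₂ _ hT' (f ≫ g) hz'
    change A ⟶ A' at h
    obtain ⟨j, hj₁, hj₂⟩ := complete_distinguished_triangle_morphism
      (Triangle.mk f p δ) (Triangle.mk f' p' δ') hT hT' h g hh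
    exact ⟨h, j, hh, hj₁, hj₂⟩
  · intro H
    obtain ⟨A, B, f, p, δ, hd⟩ := w.exists_weightDecomp n M
    obtain ⟨A', B', f', p', δ', hd'⟩ := w.exists_weightDecomp (m - 1) N
    obtain ⟨h, j, h₁, _, _⟩ := H f p δ f' p' δ' hd hd'
    refine ⟨A, B, A', B', f, p, δ, f', p', δ', hd, hd', ?_⟩
    have hz := comp_distTriang_mor_zero₁₂ _ hd'.1
    change f' ≫ p' = 0 at hz
    rw [← Category.assoc, h₁, Category.assoc, hz, comp_zero]
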